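/- arXiv:2012.15680 — 2 statements merged into one kernel-verified Lean document; each statement's English description precedes it below -/
import Mathlib

section
/- (Proposition, part (i): EDM of low-rank structures, pairwise bound.) Let B ∈ ℝ^{b×n} and M_k, M_l ∈ ℝ^{3×b}, and set X^k = M_k B and X^l = M_l B. Then the difference of Euclidean distance matrices D^{kl} = E(X^k) − E(X^l) satisfies rank(D^{kl}) ≤ min(8, b + 2). -/
open Matrix

/-- The Euclidean distance matrix of a point configuration `X ∈ ℝ^{3×n}`,
with entries `e i j = ‖x_i − x_j‖²` (columns `x_i` of `X`). -/
noncomputable def EDM {n : ℕ} (X : Matrix (Fin 3) (Fin n) ℝ) :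
    Matrix (Fin n) (Fin n) ℝ :=
  Matrix.of fun i j => ∑ k, (X k i - X k j) ^ 2

lemma matrix_rank_add_le {m n : ℕ} (A C : Matrix (Fin m) (Fin n) ℝ) :
    (A + C).rank ≤ A.rank + C.rank := by
  classical
  have hrange : LinearMap.range (A + C).mulVecLin ≤
      LinearMap.range A.mulVecLin ⊔ LinearMap.range C.mulVecLin := by
    rintro x ⟨v, rfl⟩
    rw [Matrix.mulVecLin_add]
    exact Submodule.add_mem_sup ⟨v, rfl⟩ ⟨v, rfl⟩
  calc (A + C).rank ≤ Module.finrank ℝ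
        (LinearMap.range A.mulVecLin ⊔ LinearMap.range C.mulVecLin : Submodule ℝ _) :=
        Submodule.finrank_mono hrange
    _ ≤ A.rank + C.rank := Submodule.finrank_add_le_finrank_add_finrank _ _

/-- Proposition, part (i). For `B ∈ ℝ^{b×n}` and
`M_k, M_l ∈ ℝ^{3×b}`, with `X^k = M_k B` and `X^l = M_l B`, the difference of
Euclidean distance matrices `D^{kl} = E(X^k) − E(X^l)` satisfies
`rank(D^{kl}) ≤ min(8, b + 2)`. -/
theorem edm_diff_rank_le_of_lowRank {b n : ℕ}
    (B : Matrix (Fin b) (Fin n) ℝ)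
    (Mk Ml : Matrix (Fin 3) (Fin b) ℝ) :
    (EDM (Mk * B) - EDM (Ml * B)).rank ≤ min 8 (b + 2) := by
  classical
  set Xk := Mk * B with hXk
  set Xl := Ml * B with hXl
  set u : Fin n → ℝ := fun i => (∑ k, (Xk k i) ^ 2) - ∑ k, (Xl k i) ^ 2 with hu
  set P : Matrix (Fin n) (Fin 1) ℝ := Matrix.of fun i _ => u i with hP
  set K : Matrix (Fin 1) (Fin n) ℝ := Matrix.of fun _ _ => (1 : ℝ) with hK
  set J : Matrix (Fin n) (Fin 1) ℝ := Matrix.of fun _ _ => (1 : ℝ) with hJ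
  set Q : Matrix (Fin 1) (Fin n) ℝ := Matrix.of fun _ j => u j with hQ
  set C1 : Matrix (Fin n) (Fin n) ℝ := Xkᵀ * ((-2 : ℝ) • Xk) with hC1
  set C2 : Matrix (Fin n) (Fin n) ℝ := Xlᵀ * ((2 : ℝ) • Xl) with hC2
  have hD : EDM Xk - EDM Xl = P * K + J * Q + (C1 + C2) := by
    ext i j
    simp only [EDM, Matrix.sub_apply, Matrix.add_apply, Matrix.mul_apply,
      Matrix.of_apply, hP, hK, hJ, hQ, hC1, hC2, Matrix.smul_apply,
      Matrix.transpose_apply, hu, smul_eq_mul, Fin.sum_univ_one]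
    have hterm : ∀ x : Fin 3, (Xk x i - Xk x j) ^ 2 - (Xl x i - Xl x j) ^ 2 =
        ((Xk x i ^ 2 - Xl x i ^ 2) + (Xk x j ^ 2 - Xl x j ^ 2)) +
          (Xk x i * (-2 * Xk x j) + Xl x i * (2 * Xl x j)) := fun x => by ring
    rw [← Finset.sum_sub_distrib, Finset.sum_congr rfl (fun x _ => hterm x), Finset.sum_add_distrib,
      Finset.sum_add_distrib, Finset.sum_sub_distrib, Finset.sum_sub_distrib, Finset.sum_add_distrib]
    ring
  have h1 : (P * K).rank ≤ 1 := by
    refine (Matrix.rank_mul_le_left P K).trans ?_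
    simpa using Matrix.rank_le_card_width P
  have h2 : (J * Q).rank ≤ 1 := by
    refine (Matrix.rank_mul_le_left J Q).trans ?_
    simpa using Matrix.rank_le_card_width J
  -- bound by 8
  have hC1r : C1.rank ≤ 3 := by
    refine (Matrix.rank_mul_le_left _ _).trans ?_
    simpa using Matrix.rank_le_card_width Xkᵀ
  have hC2r : C2.rank ≤ 3 := by
    refine (Matrix.rank_mul_le_left _ _).trans ?_
    simpa using Matrix.rank_le_card_width Xlᵀ
  have hCsum : (C1 + C2).rank ≤ 6 := by
    calc (C1 + C2).rank ≤ C1.rank + C2.rank := matrix_rank_add_le _ _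
      _ ≤ 6 := by omega
  -- bound C1 + C2 by b
  have hfact : C1 + C2 = Bᵀ * (Mkᵀ * ((-2 : ℝ) • Xk) + Mlᵀ * ((2 : ℝ) • Xl)) := by
    rw [hC1, hC2, hXk, hXl, Matrix.transpose_mul, Matrix.transpose_mul,
      Matrix.mul_add, Matrix.mul_assoc, Matrix.mul_assoc]
  have hCb : (C1 + C2).rank ≤ b := by
    rw [hfact]
    refine (Matrix.rank_mul_le_left _ _).trans ?_
    simpa using Matrix.rank_le_card_width Bᵀ
  have key8 : (EDM Xk - EDM Xl).rank ≤ 8 := by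
    rw [hD]
    calc (P * K + J * Q + (C1 + C2)).rank
        ≤ (P * K + J * Q).rank + (C1 + C2).rank := matrix_rank_add_le _ _
      _ ≤ ((P * K).rank + (J * Q).rank) + (C1 + C2).rank := by
          exact add_le_add (matrix_rank_add_le _ _) le_rfl
      _ ≤ 8 := by omega
  have keyb : (EDM Xk - EDM Xl).rank ≤ b + 2 := by
    rw [hD]
    calc (P * K + J * Q + (C1 + C2)).rank
        ≤ (P * K).rank + (J * Q).rank + (C1 + C2).rank :=
          (matrix_rank_add_le _ _).trans (add_le_add (matrix_rank_add_le _ _) le_rfl)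
      _ ≤ b + 2 := by omega
  exact le_min key8 keyb
end

section
/- (Proposition, part (ii): EDM of low-rank structures, stacked bound.) Let B ∈ ℝ^{b×n} and M_1, …, M_m ∈ ℝ^{3×b}, and set X^k = M_k B for k = 1, …, m. For each pair of views (k, l) let D^{kl} = E(X^k) − E(X^l) ∈ ℝ^{n×n}, and let 𝐃 be the vertical stacking of the matrices D^{kl} over all pairs 1 ≤ k < l ≤ m. Then rank(𝐃) ≤ (b+1)(b+2)/2. -/
open Matrix Finset

private theorem symsum {b : ℕ} (f : Fin b × Fin b → ℝ)
    (hf : ∀ p : Fin b × Fin b, f p.swap = f p) :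
    ∑ p : Fin b × Fin b, f p =
      ∑ p : {p : Fin b × Fin b // p.1 ≤ p.2}, (if p.1.1 < p.1.2 then 2 else 1) * f p := by
  have h1 : ∑ p : {p : Fin b × Fin b // p.1 ≤ p.2}, (if p.1.1 < p.1.2 then 2 else 1) * f p
      = ∑ p ∈ univ.filter (fun p : Fin b × Fin b => p.1 ≤ p.2),
          (if p.1 < p.2 then 2 else 1) * f p :=
    (Finset.sum_subtype (p := fun p : Fin b × Fin b => p.1 ≤ p.2) _ (by simp)
      (fun p => (if p.1 < p.2 then 2 else 1) * f p)).symm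
  rw [h1]
  have h2 : ∀ p ∈ univ.filter (fun p : Fin b × Fin b => p.1 ≤ p.2),
      (if p.1 < p.2 then (2:ℝ) else 1) * f p = f p + (if p.1 < p.2 then f p else 0) := by
    intro p _
    by_cases h : p.1 < p.2 <;> simp [h] <;> ring
  rw [Finset.sum_congr rfl h2, Finset.sum_add_distrib]
  have h3 : ∑ p ∈ univ.filter (fun p : Fin b × Fin b => p.1 ≤ p.2),
      (if p.1 < p.2 then f p else 0)
      = ∑ p ∈ univ.filter (fun p : Fin b × Fin b => p.1 < p.2), f p := by
    rw [← Finset.sum_filter, Finset.filter_filter]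
    apply Finset.sum_congr _ (fun _ _ => rfl)
    apply Finset.filter_congr
    intro p _
    constructor
    · exact fun h => h.2
    · exact fun h => ⟨h.le, h⟩
  rw [h3]
  have h4 : ∑ p : Fin b × Fin b, f p
      = ∑ p ∈ univ.filter (fun p : Fin b × Fin b => p.1 ≤ p.2), f p
        + ∑ p ∈ univ.filter (fun p : Fin b × Fin b => ¬ p.1 ≤ p.2), f p :=
    (Finset.sum_filter_add_sum_filter_not _ _ _).symm
  rw [h4]
  congr 1
  apply Finset.sum_nbij' (fun p => p.swap) (fun p => p.swap)
  · intro p hp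
    simp only [mem_filter, mem_univ, true_and, not_le] at hp ⊢
    exact hp
  · intro p hp
    simp only [mem_filter, mem_univ, true_and, not_le] at hp ⊢
    exact hp
  · intro p _; exact Prod.swap_swap p
  · intro p _; exact Prod.swap_swap p
  · intro p _; exact (hf p).symm

private theorem inner_expand {b n : ℕ} (B : Matrix (Fin b) (Fin n) ℝ)
    (M : Matrix (Fin 3) (Fin b) ℝ) (i j : Fin n) :
    ∑ r, (M * B) r i * (M * B) r j
      = ∑ s, ∑ t, (∑ r, M r s * M r t) * (B s i * B t j) := by
  have key : ∀ r, (M * B) r i * (M * B) r j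
      = ∑ s, ∑ t, (M r s * M r t) * (B s i * B t j) := by
    intro r
    rw [Matrix.mul_apply, Matrix.mul_apply, Finset.sum_mul_sum]
    apply Finset.sum_congr rfl; intro s _
    apply Finset.sum_congr rfl; intro t _
    ring
  simp only [key]
  rw [Finset.sum_comm]
  apply Finset.sum_congr rfl; intro s _
  rw [Finset.sum_comm]
  apply Finset.sum_congr rfl; intro t _
  rw [Finset.sum_mul]

private theorem EDM_expand {b n : ℕ} (B : Matrix (Fin b) (Fin n) ℝ)
    (M : Matrix (Fin 3) (Fin b) ℝ) (i j : Fin n) :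
    EDM (M * B) i j
      = (∑ s, ∑ t, (∑ r, M r s * M r t) * (B s i * B t i))
        - 2 * (∑ s, ∑ t, (∑ r, M r s * M r t) * (B s i * B t j))
        + (∑ s, ∑ t, (∑ r, M r s * M r t) * (B s j * B t j)) := by
  rw [← inner_expand, ← inner_expand, ← inner_expand]
  simp only [EDM, Matrix.of_apply]
  rw [Finset.mul_sum, ← Finset.sum_sub_distrib, ← Finset.sum_add_distrib]
  apply Finset.sum_congr rfl; intro r _
  ring

private theorem card_bound (b : ℕ) :
    1 + (b + Fintype.card {p : Fin b × Fin b // p.1 ≤ p.2}) ≤ (b + 1) * (b + 2) / 2 := by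
  have hc : Fintype.card {p : Fin b × Fin b // p.1 ≤ p.2} = (b + 1).choose 2 := by
    rw [← Fintype.card_congr (Sym2.sortEquiv (α := Fin b)), Sym2.card, Fintype.card_fin]
  rw [hc, Nat.choose_two_right]
  obtain ⟨c, hcc⟩ := Nat.even_mul_succ_self b
  have h1 : (b + 1) * (b + 1 - 1) = c + c := by
    simpa [mul_comm] using hcc
  have h2 : (b + 1) * (b + 2) = (c + c) + 2 * (b + 1) := by
    rw [← hcc]; ring
  rw [h1, h2]
  omega

/-- Proposition, part (ii). For `B ∈ ℝ^{b×n}` and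
`M_1, …, M_m ∈ ℝ^{3×b}` with `X^k = M_k B`, the vertical stacking `𝐃` of the
matrices `D^{kl} = E(X^k) − E(X^l)` over all pairs `1 ≤ k < l ≤ m` satisfies
`rank(𝐃) ≤ (b+1)(b+2)/2`. -/
theorem stacked_edm_diff_rank_le {b n m : ℕ}
    (B : Matrix (Fin b) (Fin n) ℝ)
    (M : Fin m → Matrix (Fin 3) (Fin b) ℝ) :
    (Matrix.of
      fun (p : {q : Fin m × Fin m // q.1 < q.2} × Fin n) (j : Fin n) =>
        (EDM (M p.1.1.1 * B) - EDM (M p.1.1.2 * B)) p.2 j).rank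
      ≤ (b + 1) * (b + 2) / 2 := by
  -- the symmetric "gram difference" matrix for a pair of views
  set Q : {q : Fin m × Fin m // q.1 < q.2} → Fin b → Fin b → ℝ :=
    fun q s t => (∑ r, M q.1.1 r s * M q.1.1 r t) - (∑ r, M q.1.2 r s * M q.1.2 r t) with hQ
  have hQsymm : ∀ q s t, Q q s t = Q q t s := by
    intro q s t
    simp only [hQ]
    congr 1 <;> (apply Finset.sum_congr rfl; intro r _; ring)
  -- factorization
  set U : Matrix ({q : Fin m × Fin m // q.1 < q.2} × Fin n)
      (Unit ⊕ (Fin b ⊕ {p : Fin b × Fin b // p.1 ≤ p.2})) ℝ :=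
    fun pi c =>
      match c with
      | Sum.inl _ => ∑ s, ∑ t, Q pi.1 s t * (B s pi.2 * B t pi.2)
      | Sum.inr (Sum.inl t) => -2 * ∑ s, Q pi.1 s t * B s pi.2
      | Sum.inr (Sum.inr p) => (if p.1.1 < p.1.2 then 2 else 1) * Q pi.1 p.1.1 p.1.2
    with hU
  set V : Matrix (Unit ⊕ (Fin b ⊕ {p : Fin b × Fin b // p.1 ≤ p.2})) (Fin n) ℝ :=
    fun c j =>
      match c with
      | Sum.inl _ => 1
      | Sum.inr (Sum.inl t) => B t j
      | Sum.inr (Sum.inr p) => B p.1.1 j * B p.1.2 j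
    with hV
  have hfact : (Matrix.of
      fun (p : {q : Fin m × Fin m // q.1 < q.2} × Fin n) (j : Fin n) =>
        (EDM (M p.1.1.1 * B) - EDM (M p.1.1.2 * B)) p.2 j) = U * V := by
    ext pi j
    obtain ⟨q, i⟩ := pi
    rw [Matrix.mul_apply, Fintype.sum_sum_type, Fintype.sum_sum_type]
    simp only [Matrix.of_apply, Matrix.sub_apply, hU, hV, Finset.univ_unique,
      Finset.sum_singleton, mul_one]
    rw [EDM_expand, EDM_expand]
    have lhs_eq : ((∑ s, ∑ t, (∑ r, M q.1.1 r s * M q.1.1 r t) * (B s i * B t i))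
        - 2 * (∑ s, ∑ t, (∑ r, M q.1.1 r s * M q.1.1 r t) * (B s i * B t j))
        + (∑ s, ∑ t, (∑ r, M q.1.1 r s * M q.1.1 r t) * (B s j * B t j)))
        - ((∑ s, ∑ t, (∑ r, M q.1.2 r s * M q.1.2 r t) * (B s i * B t i))
        - 2 * (∑ s, ∑ t, (∑ r, M q.1.2 r s * M q.1.2 r t) * (B s i * B t j))
        + (∑ s, ∑ t, (∑ r, M q.1.2 r s * M q.1.2 r t) * (B s j * B t j)))
        = (∑ s, ∑ t, Q q s t * (B s i * B t i))
          - 2 * (∑ s, ∑ t, Q q s t * (B s i * B t j))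
          + (∑ s, ∑ t, Q q s t * (B s j * B t j)) := by
      simp only [hQ, sub_mul, Finset.sum_sub_distrib]
      ring
    rw [lhs_eq]
    -- cross term
    have hcross : ∑ t, (-2 * ∑ s, Q q s t * B s i) * B t j
        = -2 * ∑ s, ∑ t, Q q s t * (B s i * B t j) := by
      have step : ∀ t, (-2 * ∑ s, Q q s t * B s i) * B t j
          = -2 * ∑ s, Q q s t * (B s i * B t j) := by
        intro t
        rw [mul_assoc, Finset.sum_mul]
        congr 1
        apply Finset.sum_congr rfl; intro s _
        ring
      rw [Finset.sum_congr rfl (fun t _ => step t), ← Finset.mul_sum, Finset.sum_comm]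
    -- diagonal term
    have hdiag : ∑ p : {p : Fin b × Fin b // p.1 ≤ p.2},
        ((if p.1.1 < p.1.2 then (2:ℝ) else 1) * Q q p.1.1 p.1.2) * (B p.1.1 j * B p.1.2 j)
        = ∑ s, ∑ t, Q q s t * (B s j * B t j) := by
      have e1 : (∑ s, ∑ t, Q q s t * (B s j * B t j))
          = ∑ p : Fin b × Fin b, Q q p.1 p.2 * (B p.1 j * B p.2 j) :=
        (Fintype.sum_prod_type
          (f := fun p : Fin b × Fin b => Q q p.1 p.2 * (B p.1 j * B p.2 j))).symm
      rw [e1, symsum (fun p => Q q p.1 p.2 * (B p.1 j * B p.2 j))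
        (by intro p; simp only [Prod.fst_swap, Prod.snd_swap]; rw [hQsymm]; ring)]
      apply Finset.sum_congr rfl; intro p _
      ring
    rw [hcross, hdiag]
    ring
  rw [hfact]
  calc (U * V).rank ≤ V.rank := Matrix.rank_mul_le_right U V
    _ ≤ Fintype.card (Unit ⊕ (Fin b ⊕ {p : Fin b × Fin b // p.1 ≤ p.2})) :=
        Matrix.rank_le_card_height V
    _ = 1 + (b + Fintype.card {p : Fin b × Fin b // p.1 ≤ p.2}) := by
        simp [Fintype.card_sum]
    _ ≤ (b + 1) * (b + 2) / 2 := card_bound b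
end
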